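/- Asymptotics of θ₃ under admissible scaling: let (λ_n) be an admissible scale, ℓ > 0, v ∈ ℝ. Then θ₃(e^{-2πv}; e^{-πℓ/λ_n}) = √(λ_n/ℓ) e^{πλ_n v²/ℓ} (1 + O(e^{-πλ_n/ℓ})) as n → ∞, uniformly for all v ∈ ℝ, where θ₃(z;q) = Σ_{k∈ℤ} q^{k²} z^k. -/

import Mathlib

open Filter Real

section aux


open Complex

private lemma geom_int_hasSum {y : ℝ} (h0 : 0 < y) (h1 : y < 1) :
    HasSum (fun n : ℤ => if n = 0 then 0 else y ^ n.natAbs) (y / (1 - y) + 0 + y / (1 - y)) := by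
  have hgeo : HasSum (fun n : ℕ => y ^ (n + 1)) (y / (1 - y)) := by
    simp_rw [pow_succ', div_eq_mul_inv, hasSum_mul_left_iff h0.ne']
    exact hasSum_geometric_of_lt_one h0.le h1
  have hp : HasSum (fun n : ℕ => if ((n : ℤ) + 1) = 0 then 0 else y ^ ((n : ℤ) + 1).natAbs)
      (y / (1 - y)) := by convert hgeo using 2 with n; rw [if_neg (by omega)]; congr 1
  have hm : HasSum (fun n : ℕ => if (-((n : ℤ) + 1)) = 0 then 0 else y ^ (-((n : ℤ) + 1)).natAbs)
      (y / (1 - y)) := by convert hgeo using 2 with n; rw [if_neg (by omega)]; congr 1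
  have h0' : (if (0 : ℤ) = 0 then (0:ℝ) else y ^ (0:ℤ).natAbs) = 0 := by simp
  exact h0' ▸ HasSum.of_add_one_of_neg_add_one hp hm

private lemma geom_int_summable {y : ℝ} (h0 : 0 < y) (h1 : y < 1) :
    Summable (fun n : ℤ => y ^ n.natAbs) := by
  apply Summable.of_nat_of_neg
  · simpa using summable_geometric_of_lt_one h0.le h1
  · simpa using summable_geometric_of_lt_one h0.le h1

private lemma natAbs_le_sq (n : ℤ) : ((n.natAbs:ℝ)) ≤ (n:ℝ)^2 := by
  have h0 : n.natAbs ≤ n.natAbs^2 := Nat.le_self_pow two_ne_zero _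
  have h1 : ((n.natAbs:ℝ))^2 = (n:ℝ)^2 := by
    rw [Nat.cast_natAbs, Int.cast_abs, _root_.sq_abs]
  calc ((n.natAbs:ℝ)) ≤ ((n.natAbs:ℝ))^2 := by exact_mod_cast h0
    _ = (n:ℝ)^2 := h1

private lemma key (lam l v : ℝ) (hlam : 0 < lam) (hl : 0 < l)
    (hT : 1 ≤ Real.pi * lam / l) :
    |(∑' k : ℤ, Real.exp (-Real.pi * l / lam) ^ (k ^ 2) * Real.exp (-2 * Real.pi * v) ^ k) -
        Real.sqrt (lam / l) * Real.exp (Real.pi * lam * v ^ 2 / l)| ≤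
      Real.sqrt (lam / l) * Real.exp (Real.pi * lam * v ^ 2 / l) *
        (4 * Real.exp (-(Real.pi * lam / l))) := by
  set T : ℝ := Real.pi * lam / l with hTdef
  have hT0 : 0 < T := by positivity
  set y : ℝ := Real.exp (-T) with hydef
  have hy0 : 0 < y := Real.exp_pos _
  have hy1 : y < 1 := Real.exp_lt_one_iff.mpr (by linarith)
  have hyhalf : y ≤ 1/2 := by
    have hy2 : y ≤ Real.exp (-1) := Real.exp_le_exp.mpr (by linarith)
    have h2 : (2:ℝ) ≤ Real.exp 1 := by linarith [Real.add_one_le_exp 1]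
    have h3 : (Real.exp 1)⁻¹ ≤ 2⁻¹ := inv_anti₀ (by norm_num) h2
    rw [Real.exp_neg] at hy2
    linarith
  set g : ℤ → ℂ := fun n =>
    Complex.exp (((-Real.pi * lam * (n:ℝ)^2 / l : ℝ) : ℂ)
      + ((2*Real.pi*lam*v*(n:ℝ)/l : ℝ):ℂ) * Complex.I) with hgdef
  have hgnorm : ∀ n : ℤ, ‖g n‖ = Real.exp (-T * (n:ℝ)^2) := by
    intro n
    rw [hgdef]
    rw [Complex.norm_exp]
    have : (((-Real.pi * lam * (n:ℝ)^2 / l : ℝ) : ℂ)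
        + ((2*Real.pi*lam*v*(n:ℝ)/l : ℝ):ℂ) * Complex.I).re
        = -Real.pi * lam * (n:ℝ)^2 / l := by
      simp only [Complex.add_re, Complex.ofReal_re, Complex.mul_re, Complex.I_re, Complex.I_im,
        Complex.ofReal_im]
      ring
    rw [this, hTdef]
    congr 1
    ring
  have hgbound : ∀ n : ℤ, ‖g n‖ ≤ y ^ n.natAbs := by
    intro n
    rw [hgnorm, hydef, ← Real.exp_nat_mul]
    apply Real.exp_le_exp.mpr
    have := natAbs_le_sq n
    nlinarith
  have hgsummable : Summable g :=
    Summable.of_norm (Summable.of_nonneg_of_le (fun n => norm_nonneg _) hgbound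
      (geom_int_summable hy0 hy1))
  have hg0 : g 0 = 1 := by
    rw [hgdef]
    norm_num
  -- Step 1 : complexify the sum
  have step1 : ((∑' k : ℤ, Real.exp (-Real.pi * l / lam) ^ (k ^ 2)
       * Real.exp (-2 * Real.pi * v) ^ k : ℝ) : ℂ)
      = ∑' k : ℤ, Complex.exp (-(Real.pi:ℂ) * ((l/lam : ℝ):ℂ) * (k:ℂ) ^ 2
          + 2 * (Real.pi:ℂ) * ((-v : ℝ):ℂ) * (k:ℂ)) := by
    rw [Complex.ofReal_tsum]
    refine tsum_congr fun k => ?_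
    rw [← Real.rpow_intCast, ← Real.rpow_intCast, ← Real.exp_mul, ← Real.exp_mul, ← Real.exp_add,
      Complex.ofReal_exp]
    push_cast
    ring_nf
  -- Step 2 : Poisson summation / theta transformation
  have ha : 0 < (((l/lam : ℝ):ℂ)).re := by
    rw [Complex.ofReal_re]; positivity
  have step2 := Complex.tsum_exp_neg_quadratic ha ((-v : ℝ):ℂ)
  -- Step 3 : the square root factor
  have step3 : 1 / (((l/lam : ℝ) : ℂ) ^ (1/2 : ℂ)) = (Real.sqrt (lam / l) : ℂ) := by
    rw [show ((1/2 : ℂ)) = ((1/2 : ℝ) : ℂ) by norm_num,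
      ← Complex.ofReal_cpow (by positivity) (1/2 : ℝ),
      ← Real.sqrt_eq_rpow]
    rw [show (1 : ℂ) = ((1:ℝ):ℂ) by norm_num, ← Complex.ofReal_div]
    congr 1
    rw [one_div, ← Real.sqrt_inv, inv_div]
  -- Step 4 : rewrite the dual sum
  have step4 : ∀ n : ℤ, Complex.exp (-(Real.pi:ℂ)/((l/lam : ℝ):ℂ)
        * ((n:ℂ) + Complex.I * ((-v : ℝ):ℂ))^2)
      = (Real.exp (Real.pi * lam * v^2 / l) : ℂ) * g n := by
    intro n
    rw [hgdef, Complex.ofReal_exp, ← Complex.exp_add]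
    congr 1
    have h1 : (lam : ℂ) ≠ 0 := by
      simp only [ne_eq, Complex.ofReal_eq_zero]; positivity
    have h2 : (l : ℂ) ≠ 0 := by
      simp only [ne_eq, Complex.ofReal_eq_zero]; positivity
    push_cast
    field_simp
    ring_nf
    simp [Complex.I_sq]
  have step5 : ((∑' k : ℤ, Real.exp (-Real.pi * l / lam) ^ (k ^ 2)
       * Real.exp (-2 * Real.pi * v) ^ k : ℝ) : ℂ)
      = (Real.sqrt (lam / l) : ℂ) * ((Real.exp (Real.pi * lam * v^2 / l) : ℂ) * ∑' n : ℤ, g n) := by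
    rw [step1, step2, step3]
    congr 1
    rw [← tsum_mul_left]
    exact tsum_congr step4
  -- Step 6 : bound the remainder sum
  have hsum_ite : Summable (fun n : ℤ => ‖if n = 0 then 0 else g n‖) := by
    apply Summable.of_nonneg_of_le (fun n => norm_nonneg _) _ (geom_int_summable hy0 hy1)
    intro n
    by_cases h : n = 0
    · simp [h, (pow_pos hy0 _).le]
    · simpa [h] using hgbound n
  have step6 : ‖(∑' n : ℤ, g n) - 1‖ ≤ 4 * y := by
    have heq : (∑' n : ℤ, g n) - 1 = ∑' n : ℤ, (if n = 0 then 0 else g n) := by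
      rw [Summable.tsum_eq_add_tsum_ite hgsummable 0, hg0]
      ring
    rw [heq]
    refine le_trans (norm_tsum_le_tsum_norm hsum_ite) ?_
    have hle : ∀ n : ℤ, ‖if n = 0 then 0 else g n‖ ≤ (if n = 0 then 0 else y ^ n.natAbs) := by
      intro n
      by_cases h : n = 0
      · simp [h]
      · simpa [h] using hgbound n
    have hFsummable := (geom_int_hasSum hy0 hy1).summable
    refine le_trans (Summable.tsum_le_tsum hle hsum_ite hFsummable) ?_
    rw [(geom_int_hasSum hy0 hy1).tsum_eq]
    have hden : (1:ℝ)/2 ≤ 1 - y := by linarith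
    have : y / (1 - y) ≤ 2 * y := by
      rw [div_le_iff₀ (by linarith)]
      nlinarith
    linarith
  -- conclude
  have habs : |(∑' k : ℤ, Real.exp (-Real.pi * l / lam) ^ (k ^ 2)
       * Real.exp (-2 * Real.pi * v) ^ k) -
        Real.sqrt (lam / l) * Real.exp (Real.pi * lam * v ^ 2 / l)|
      = Real.sqrt (lam / l) * Real.exp (Real.pi * lam * v ^ 2 / l) * ‖(∑' n : ℤ, g n) - 1‖ := by
    have : ((((∑' k : ℤ, Real.exp (-Real.pi * l / lam) ^ (k ^ 2)
       * Real.exp (-2 * Real.pi * v) ^ k) -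
        Real.sqrt (lam / l) * Real.exp (Real.pi * lam * v ^ 2 / l)) : ℝ) : ℂ)
        = (Real.sqrt (lam / l) : ℂ) * (Real.exp (Real.pi * lam * v^2 / l) : ℂ)
          * ((∑' n : ℤ, g n) - 1) := by
      rw [Complex.ofReal_sub, step5]
      push_cast
      ring
    calc |(∑' k : ℤ, Real.exp (-Real.pi * l / lam) ^ (k ^ 2)
       * Real.exp (-2 * Real.pi * v) ^ k) -
        Real.sqrt (lam / l) * Real.exp (Real.pi * lam * v ^ 2 / l)|
        = ‖((((∑' k : ℤ, Real.exp (-Real.pi * l / lam) ^ (k ^ 2)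
       * Real.exp (-2 * Real.pi * v) ^ k) -
        Real.sqrt (lam / l) * Real.exp (Real.pi * lam * v ^ 2 / l)) : ℝ) : ℂ)‖ := by
          rw [Complex.norm_real, Real.norm_eq_abs]
      _ = ‖(Real.sqrt (lam / l) : ℂ)‖ * ‖(Real.exp (Real.pi * lam * v^2 / l) : ℂ)‖
          * ‖(∑' n : ℤ, g n) - 1‖ := by rw [this, norm_mul, norm_mul]
      _ = Real.sqrt (lam / l) * Real.exp (Real.pi * lam * v ^ 2 / l) * ‖(∑' n : ℤ, g n) - 1‖ := by
          rw [Complex.norm_real, Complex.norm_real, Real.norm_eq_abs, Real.norm_eq_abs,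
            _root_.abs_of_nonneg (Real.sqrt_nonneg _), _root_.abs_of_nonneg (Real.exp_pos _).le]
  rw [habs]
  have hA : 0 ≤ Real.sqrt (lam / l) * Real.exp (Real.pi * lam * v ^ 2 / l) := by positivity
  calc Real.sqrt (lam / l) * Real.exp (Real.pi * lam * v ^ 2 / l) * ‖(∑' n : ℤ, g n) - 1‖
      ≤ Real.sqrt (lam / l) * Real.exp (Real.pi * lam * v ^ 2 / l) * (4 * y) :=
        mul_le_mul_of_nonneg_left step6 hA
    _ = Real.sqrt (lam / l) * Real.exp (Real.pi * lam * v ^ 2 / l)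
        * (4 * Real.exp (-(Real.pi * lam / l))) := by rw [hydef]

end aux

/-- Asymptotics of `θ₃` under admissible scaling: for an admissible scale `(λ_n)`,
`ℓ > 0`, one has `θ₃(e^{-2πv}; e^{-πℓ/λ_n}) = √(λ_n/ℓ) e^{πλ_n v²/ℓ} (1 + O(e^{-πλ_n/ℓ}))`
as `n → ∞`, uniformly for all `v ∈ ℝ`, where `θ₃(z;q) = Σ_{k∈ℤ} q^{k²} z^k`. -/
theorem stmt_15 (lam : ℕ → ℝ) (hpos : ∀ n, 0 < lam n)
    (h1 : Tendsto (fun n : ℕ => lam n / Real.log n) atTop atTop)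
    (h2 : Tendsto (fun n : ℕ => (n : ℝ) / (lam n) ^ 2) atTop atTop)
    (l : ℝ) (hl : 0 < l) :
    ∃ C : ℝ, ∃ N : ℕ, ∀ n ≥ N, ∀ v : ℝ,
      |(∑' k : ℤ, Real.exp (-Real.pi * l / lam n) ^ (k ^ 2) * Real.exp (-2 * Real.pi * v) ^ k) -
          Real.sqrt (lam n / l) * Real.exp (Real.pi * lam n * v ^ 2 / l)| ≤
        Real.sqrt (lam n / l) * Real.exp (Real.pi * lam n * v ^ 2 / l) *
          (C * Real.exp (-Real.pi * lam n / l)) := by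
  obtain ⟨N₁, hN₁⟩ := Filter.eventually_atTop.mp (h1.eventually_ge_atTop (l / Real.pi))
  refine ⟨4, max N₁ 3, fun n hn v => ?_⟩
  have hn1 : N₁ ≤ n := le_trans (le_max_left _ _) hn
  have hn3 : (3:ℕ) ≤ n := le_trans (le_max_right _ _) hn
  have hlog : 1 ≤ Real.log n := by
    have h3 : Real.exp 1 ≤ 3 := by linarith [Real.exp_one_lt_d9]
    have : (3:ℝ) ≤ (n:ℝ) := by exact_mod_cast hn3
    calc (1:ℝ) = Real.log (Real.exp 1) := (Real.log_exp 1).symm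
      _ ≤ Real.log n := Real.log_le_log (Real.exp_pos 1) (by linarith)
  have hT : 1 ≤ Real.pi * lam n / l := by
    have hlam : l / Real.pi ≤ lam n / Real.log n := hN₁ n hn1
    have hlog0 : 0 < Real.log n := by linarith
    have hmul : l * Real.log n ≤ lam n * Real.pi :=
      (div_le_div_iff₀ Real.pi_pos hlog0).mp hlam
    rw [le_div_iff₀ hl, one_mul]
    nlinarith [hl, hlog]
  have := key (lam n) l v (hpos n) hl hT
  have heq : -Real.pi * lam n / l = -(Real.pi * lam n / l) := by ring
  rw [heq]
  exact this
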